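/- Let G be a finite undirected graph with minimum degree at least D ≥ 1, α ∈ (0,1), and let r^(0) = e_s (the indicator of a source node s). Define r^(j) by the push-flow recursion r^(j)_v = ((1-α)/2)·(r^(j-1)_v + Σ_{u:(u,v)∈E} r^(j-1)_u/d(u)). Then for all j ≥ 1 and all u ≠ s, r^(j)_u ≤ (1-α)^j / D. -/

import Mathlib

open Finset

theorem push_flow_residual_entry_bound {V : Type*} [Fintype V] [DecidableEq V] (G : SimpleGraph V)
    [DecidableRel G.Adj] (D : ℕ) (hD : 1 ≤ D) (hdeg : ∀ v, D ≤ G.degree v)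
    (α : ℝ) (hα : α ∈ Set.Ioo (0:ℝ) 1) (s : V)
    (r : ℕ → V → ℝ) (h0 : ∀ v, r 0 v = if v = s then 1 else 0)
    (hrec : ∀ j v, r (j + 1) v = ((1 - α) / 2) *
      (r j v + ∑ u ∈ G.neighborFinset v, r j u / (G.degree u : ℝ))) :
    ∀ j : ℕ, 1 ≤ j → ∀ u : V, u ≠ s → r j u ≤ (1 - α) ^ j / D := by
  obtain ⟨hα0, hα1⟩ := hα
  have h1α : (0:ℝ) < 1 - α := by linarith
  have hDpos : (0:ℝ) < D := by exact_mod_cast hD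
  have hdegpos : ∀ v, (0:ℝ) < (G.degree v : ℝ) := by
    intro v
    have h := hdeg v
    have : (D:ℝ) ≤ (G.degree v : ℝ) := by exact_mod_cast h
    linarith
  have hnn : ∀ j v, 0 ≤ r j v := by
    intro j
    induction j with
    | zero =>
      intro v; rw [h0]; split <;> norm_num
    | succ j ih =>
      intro v; rw [hrec]
      apply mul_nonneg (by linarith)
      apply add_nonneg (ih v)
      exact Finset.sum_nonneg fun u _ => div_nonneg (ih u) (le_of_lt (hdegpos u))
  have hmass : ∀ j, ∑ v, r j v ≤ (1 - α) ^ j := by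
    intro j
    induction j with
    | zero => simp [h0]
    | succ j ih =>
      have hswap : ∑ v : V, ∑ u ∈ G.neighborFinset v, r j u / (G.degree u : ℝ)
          = ∑ u : V, r j u := by
        have h1 : ∀ v : V, ∑ u ∈ G.neighborFinset v, r j u / (G.degree u : ℝ)
            = ∑ u : V, if G.Adj v u then r j u / (G.degree u : ℝ) else 0 := by
          intro v
          rw [SimpleGraph.neighborFinset_eq_filter, Finset.sum_filter]
        simp only [h1]
        rw [Finset.sum_comm]
        have h2 : ∀ u : V, ∑ v : V, (if G.Adj v u then r j u / (G.degree u : ℝ) else 0)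
            = r j u := by
          intro u
          have : ∑ v : V, (if G.Adj v u then r j u / (G.degree u : ℝ) else 0)
              = ∑ v ∈ G.neighborFinset u, r j u / (G.degree u : ℝ) := by
            rw [SimpleGraph.neighborFinset_eq_filter, Finset.sum_filter]
            apply Finset.sum_congr rfl
            intro v _
            exact if_congr (G.adj_comm v u) rfl rfl
          rw [this, Finset.sum_const, SimpleGraph.card_neighborFinset_eq_degree,
            nsmul_eq_mul]
          rw [mul_comm]
          exact div_mul_cancel₀ _ (hdegpos u).ne'
        simp only [h2]
      calc ∑ v, r (j+1) v
          = ((1-α)/2) * (∑ v, r j v + ∑ v : V, ∑ u ∈ G.neighborFinset v,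
              r j u / (G.degree u : ℝ)) := by
            simp only [hrec]
            rw [← Finset.mul_sum, Finset.sum_add_distrib]
        _ = (1-α) * ∑ v, r j v := by rw [hswap]; ring
        _ ≤ (1-α) * (1-α)^j := by
            exact mul_le_mul_of_nonneg_left ih (le_of_lt h1α)
        _ = (1-α)^(j+1) := by ring
  have main : ∀ j, ∀ u, u ≠ s → r j u ≤ (1-α)^j / D := by
    intro j
    induction j with
    | zero =>
      intro u hu
      rw [h0]
      simp only [hu, if_false]
      positivity
    | succ j ih =>
      intro u hu
      have hsum : ∑ w ∈ G.neighborFinset u, r j w / (G.degree w : ℝ) ≤ (1-α)^j / D := by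
        calc ∑ w ∈ G.neighborFinset u, r j w / (G.degree w : ℝ)
            ≤ ∑ w ∈ G.neighborFinset u, r j w / (D:ℝ) := by
              apply Finset.sum_le_sum
              intro w _
              apply div_le_div_of_nonneg_left (hnn j w) hDpos
              exact_mod_cast hdeg w
          _ = (∑ w ∈ G.neighborFinset u, r j w) / D := by rw [Finset.sum_div]
          _ ≤ (∑ v, r j v) / D := by
              apply div_le_div_of_nonneg_right ?_ hDpos.le
              exact Finset.sum_le_sum_of_subset_of_nonneg (Finset.subset_univ _)
                fun v _ _ => hnn j v
          _ ≤ (1-α)^j / D := by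
              exact div_le_div_of_nonneg_right (hmass j) hDpos.le
      rw [hrec]
      calc ((1-α)/2) * (r j u + ∑ w ∈ G.neighborFinset u, r j w / (G.degree w : ℝ))
          ≤ ((1-α)/2) * ((1-α)^j/D + (1-α)^j/D) := by
            exact mul_le_mul_of_nonneg_left (add_le_add (ih u hu) hsum) (by linarith)
        _ = (1-α)^(j+1)/D := by ring
  intro j _ u hu
  exact main j u hu
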